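/- Let D be a DAG on a finite vertex set V in which every edge is protected, let S be a finite set disjoint from V, and let (P_s)_{s∈S} be a family of subsets of V. Let D' be the graph on V ∪ S obtained from D by adding, for each s ∈ S, an edge v→s for every v ∈ P_s, and no other edges. Then D' is a DAG in which every vertex of S is a sink, and every edge of D' is protected if and only if for every s ∈ S and every v ∈ V one has P_s ≠ {v} ∪ pa(v) (where pa is taken in D). Moreover, every DAG on V ∪ S in which every edge is protected, every vertex of S is a sink, and whose induced subgraph on V equals D arises in this way from a unique such family (P_s)_{s∈S}. -/
import Mathlib


/-- A DAG on a vertex type `V`: an irreflexive relation with no directed cycles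
(its transitive closure is irreflexive). -/
def IsDag {V : Type*} (E : V → V → Prop) : Prop :=
  Irreflexive E ∧ Irreflexive (Relation.TransGen E)

/-- The set of parents of `b`. -/
def pa {V : Type*} (E : V → V → Prop) (b : V) : Set V := {a | E a b}

/-- An edge `a → b` is protected if `pa b \ {a} ≠ pa a`. -/
def IsProtectedEdge {V : Type*} (E : V → V → Prop) (a b : V) : Prop :=
  pa E b \ {a} ≠ pa E a

private lemma img_diff_ne {V S : Type*} {A B : Set V} {a : V} :
    (Sum.inl '' A : Set (V ⊕ S)) \ {Sum.inl a} ≠ Sum.inl '' B ↔ A \ {a} ≠ B := by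
  rw [← Set.image_singleton, ← Set.image_diff Sum.inl_injective]
  exact not_congr (Set.image_eq_image Sum.inl_injective)

/-- Let `D` (relation `E` on `V`) be a DAG all of whose edges are protected, `S` a
finite set disjoint from `V` (modelled via the sum type `V ⊕ S`), and `(P s)_{s ∈ S}`
a family of subsets of `V`.  The graph `E'` on `V ⊕ S` obtained by adding an edge
`v → s` for each `s ∈ S` and `v ∈ P s` (and no other edges) is a DAG in which every
vertex of `S` is a sink; all its edges are protected iff `P s ≠ {v} ∪ pa(v)` for all
`s ∈ S`, `v ∈ V`.  Moreover every all-edges-protected DAG on `V ⊕ S` in which every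
vertex of `S` is a sink and whose induced subgraph on `V` is `D` arises this way
from a unique such family. -/
theorem extend_by_sinks {V S : Type*} [Fintype V] [Fintype S]
    (E : V → V → Prop) (hE : IsDag E)
    (hp : ∀ a b, E a b → IsProtectedEdge E a b)
    (P : S → Set V)
    (E' : V ⊕ S → V ⊕ S → Prop)
    (h1 : ∀ v w : V, E' (Sum.inl v) (Sum.inl w) ↔ E v w)
    (h2 : ∀ (v : V) (s : S), E' (Sum.inl v) (Sum.inr s) ↔ v ∈ P s)
    (h3 : ∀ (s : S) (y : V ⊕ S), ¬ E' (Sum.inr s) y) :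
    (IsDag E' ∧ ∀ (s : S) (y : V ⊕ S), ¬ E' (Sum.inr s) y) ∧
      ((∀ a b, E' a b → IsProtectedEdge E' a b) ↔
        ∀ (s : S) (v : V), P s ≠ insert v (pa E v)) ∧
      (∀ F : V ⊕ S → V ⊕ S → Prop, IsDag F →
        (∀ a b, F a b → IsProtectedEdge F a b) →
        (∀ (s : S) (y : V ⊕ S), ¬ F (Sum.inr s) y) →
        (∀ v w : V, F (Sum.inl v) (Sum.inl w) ↔ E v w) →
        ∃! Q : S → Set V,
          (∀ (s : S) (v : V), Q s ≠ insert v (pa E v)) ∧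
          ∀ x y : V ⊕ S, F x y ↔
            ((∃ v w : V, x = Sum.inl v ∧ y = Sum.inl w ∧ E v w) ∨
              (∃ (v : V) (s : S), x = Sum.inl v ∧ y = Sum.inr s ∧ v ∈ Q s))) := by
  -- parents in any F with S sinks and restriction E
  have paF_inl : ∀ (F : V ⊕ S → V ⊕ S → Prop),
      (∀ (s : S) (y : V ⊕ S), ¬ F (Sum.inr s) y) →
      (∀ v w : V, F (Sum.inl v) (Sum.inl w) ↔ E v w) →
      ∀ w : V, pa F (Sum.inl w) = Sum.inl '' pa E w := by
    intro F h3F h1F w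
    ext x
    cases x with
    | inl v => simp [pa, h1F, Sum.inl_injective.eq_iff]
    | inr s => simp [pa, h3F]
  have paF_inr : ∀ (F : V ⊕ S → V ⊕ S → Prop),
      (∀ (s : S) (y : V ⊕ S), ¬ F (Sum.inr s) y) →
      ∀ s : S, pa F (Sum.inr s) = Sum.inl '' {w | F (Sum.inl w) (Sum.inr s)} := by
    intro F h3F s
    ext x
    cases x with
    | inl v => simp [pa, Sum.inl_injective.eq_iff]
    | inr t => simp [pa, h3F]
  -- key: in such an F all-protected, the parent sets of sinks avoid insert v (pa E v)
  have key : ∀ (F : V ⊕ S → V ⊕ S → Prop),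
      (∀ a b, F a b → IsProtectedEdge F a b) →
      (∀ (s : S) (y : V ⊕ S), ¬ F (Sum.inr s) y) →
      (∀ v w : V, F (Sum.inl v) (Sum.inl w) ↔ E v w) →
      ∀ (s : S) (v : V), {w | F (Sum.inl w) (Sum.inr s)} ≠ insert v (pa E v) := by
    intro F hpF h3F h1F s v hco
    have hv : F (Sum.inl v) (Sum.inr s) := by
      show v ∈ {w | F (Sum.inl w) (Sum.inr s)}
      rw [hco]; exact Set.mem_insert _ _
    have hprot := hpF _ _ hv
    unfold IsProtectedEdge at hprot
    rw [paF_inr F h3F, paF_inl F h3F h1F, img_diff_ne, hco] at hprot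
    exact hprot (Set.insert_diff_self_of_notMem (hE.1 v))
  refine ⟨⟨⟨?_, ?_⟩, h3⟩, ?_, ?_⟩
  · -- irreflexive E'
    intro x hx
    cases x with
    | inl v => exact hE.1 v ((h1 v v).1 hx)
    | inr s => exact h3 s _ hx
  · -- acyclic
    have lift : ∀ x y, Relation.TransGen E' x y →
        ∀ v w, x = Sum.inl v → y = Sum.inl w → Relation.TransGen E v w := by
      intro x y h
      induction h with
      | single h =>
        rintro v w rfl rfl
        exact Relation.TransGen.single ((h1 v w).1 h)
      | tail _ h ih =>
        rintro v w rfl rfl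
        rename_i b _
        cases b with
        | inl u => exact Relation.TransGen.tail (ih v u rfl rfl) ((h1 u w).1 h)
        | inr s => exact absurd h (h3 s _)
    intro x hx
    cases x with
    | inl v => exact hE.2 v (lift _ _ hx v v rfl rfl)
    | inr s =>
      have norx : ∀ x y, Relation.TransGen E' x y → ∀ t : S, x = Sum.inr t → False := by
        intro x y h
        induction h with
        | single h => rintro t rfl; exact h3 t _ h
        | tail _ _ ih => exact ih
      exact norx _ _ hx s rfl
  · -- protectedness iff
    constructor
    · intro hall s v
      have hset : {w | E' (Sum.inl w) (Sum.inr s)} = P s := by ext w; exact h2 w s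
      have := key E' hall h3 h1 s v
      rwa [hset] at this
    · intro hcond a b hab
      cases a with
      | inr s => exact absurd hab (h3 s _)
      | inl v =>
        cases b with
        | inl w =>
          have := hp v w ((h1 v w).1 hab)
          unfold IsProtectedEdge at this ⊢
          rwa [paF_inl E' h3 h1, paF_inl E' h3 h1, img_diff_ne]
        | inr s =>
          have hvP : v ∈ P s := (h2 v s).1 hab
          unfold IsProtectedEdge
          rw [paF_inr E' h3, paF_inl E' h3 h1, img_diff_ne]
          have hset : {w | E' (Sum.inl w) (Sum.inr s)} = P s := by
            ext w; exact h2 w s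
          rw [hset]
          intro heq
          apply hcond s v
          rw [← heq, Set.insert_diff_singleton, Set.insert_eq_self.2 hvP]
  · -- uniqueness part
    intro F hF hpF h3F h1F
    refine ⟨fun s => {w | F (Sum.inl w) (Sum.inr s)}, ⟨key F hpF h3F h1F, ?_⟩, ?_⟩
    · intro x y
      cases x with
      | inr s => simp [h3F s y]
      | inl v =>
        cases y with
        | inl w => simp [h1F v w]
        | inr s => simp
    · rintro Q ⟨-, hrep⟩
      funext s
      ext v
      have := hrep (Sum.inl v) (Sum.inr s)
      simp only [Sum.inl.injEq, Sum.inr.injEq, reduceCtorEq, exists_and_left,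
        exists_eq_left', false_and, and_false, exists_false, or_false, false_or,
        exists_eq_left] at this
      simp only [Set.mem_setOf_eq]
      rw [this]
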